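/- arXiv:2509.25972 — 2 statements merged into one kernel-verified Lean document; each statement's English description precedes it below -/
import Mathlib

section
/- Let K be a field of characteristic 0, let g, ω ∈ J(K) and n ≥ 1. If ω is the root of order n of g (that is, ω^[n] = g), then the multiplicity of ω equals the multiplicity of g; equivalently, the order of the power series ω − x equals the order of the power series g − x (with the convention that the zero power series has order ∞). -/
open PowerSeries Finset

/-- Composition `f ∘ g` of formal power series (substitution of `g` into `f`).
This coefficientwise formula agrees with the usual substitution whenever the
constant coefficient of `g` is zero, since then `g ^ j` has order at least `j`. -/
noncomputable def psComp {Z : Type*} [CommRing Z] (f g : Z⟦X⟧) : Z⟦X⟧ :=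
  PowerSeries.mk fun n => ∑ j ∈ Finset.range (n + 1), coeff (R := Z) j f * coeff (R := Z) n (g ^ j)

/-- The `m`-th compositional iterate: `ω^[0] = X` and `ω^[m+1] = ω ∘ ω^[m]`. -/
noncomputable def psIter {Z : Type*} [CommRing Z] (ω : Z⟦X⟧) : ℕ → Z⟦X⟧
  | 0 => PowerSeries.X
  | m + 1 => psComp ω (psIter ω m)

section Aux

variable {Z : Type*} [CommRing Z]

lemma coeff_psComp (f g : Z⟦X⟧) (m : ℕ) :
    coeff (R := Z) m (psComp f g) = ∑ j ∈ Finset.range (m + 1), coeff (R := Z) j f * coeff (R := Z) m (g ^ j) :=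
  coeff_mk _ _

/-- Predicate: `h = X + (terms of degree ≥ k)`. -/
def PsTame (k : ℕ) (h : Z⟦X⟧) : Prop :=
  constantCoeff (R := Z) h = 0 ∧ coeff (R := Z) 1 h = 1 ∧ ∀ j, 2 ≤ j → j < k → coeff (R := Z) j h = 0

lemma psTame_X_pow_dvd {k : ℕ} {h : Z⟦X⟧} (H : PsTame k h) :
    (PowerSeries.X : Z⟦X⟧) ^ k ∣ h - PowerSeries.X := by
  rw [PowerSeries.X_pow_dvd_iff]
  intro m hm
  rw [map_sub, PowerSeries.coeff_X]
  rcases Nat.lt_or_ge m 2 with h2 | h2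
  · interval_cases m
    · simpa [PowerSeries.coeff_zero_eq_constantCoeff] using H.1
    · simp [H.2.1]
  · rw [H.2.2 m h2 hm, if_neg (by omega)]
    ring

lemma psTame_coeff_pow_self {k : ℕ} {h : Z⟦X⟧} (hk : 2 ≤ k) (H : PsTame k h) :
    coeff (R := Z) k (h ^ k) = 1 := by
  obtain ⟨r, hr⟩ := psTame_X_pow_dvd H
  have hh : h = PowerSeries.X + PowerSeries.X ^ k * r := by
    rw [← hr]; ring
  rw [hh, add_pow]
  rw [map_sum]
  rw [Finset.sum_eq_single k]
  · simp [PowerSeries.coeff_X_pow]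
  · intro i hi hik
    have hik' : i < k := by
      simp only [Finset.mem_range] at hi; omega
    have h1 : 1 ≤ k - i := by omega
    -- the term is X^i * (X^k * r)^(k-i) * C(k,i), divisible by X^(i + k*(k-i))
    have hdvd : (PowerSeries.X : Z⟦X⟧) ^ (k + 1) ∣
        PowerSeries.X ^ i * (PowerSeries.X ^ k * r) ^ (k - i) * (k.choose i : Z⟦X⟧) := by
      have h3 : (PowerSeries.X : Z⟦X⟧) ^ (i + k * (k - i)) ∣
          PowerSeries.X ^ i * (PowerSeries.X ^ k * r) ^ (k - i) := by
        rw [mul_pow, ← pow_mul, pow_add]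
        exact mul_dvd_mul_left _ (dvd_mul_right _ _)
      have h4 : k + 1 ≤ i + k * (k - i) := by
        have f1 : k * 1 ≤ k * (k - i) := Nat.mul_le_mul_left k h1
        rcases Nat.eq_zero_or_pos i with rfl | hip
        · have f2 : 2 * (k - 0) ≤ k * (k - 0) := Nat.mul_le_mul_right _ hk
          omega
        · omega
      exact ((pow_dvd_pow _ h4).trans h3).mul_right _
    rw [PowerSeries.X_pow_dvd_iff] at hdvd
    exact hdvd k (by omega)
  · intro hki
    exact absurd (Finset.self_mem_range_succ k) hki

lemma psTame_comp {k : ℕ} {f h : Z⟦X⟧} (hk : 2 ≤ k) (Hf : PsTame k f) (Hh : PsTame k h) :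
    PsTame k (psComp f h) ∧ coeff (R := Z) k (psComp f h) = coeff (R := Z) k f + coeff (R := Z) k h := by
  have hconst : constantCoeff (R := Z) (psComp f h) = 0 := by
    have h0 : coeff (R := Z) 0 (psComp f h) = coeff (R := Z) 0 f * coeff (R := Z) 0 (h ^ 0) := by
      rw [coeff_psComp, Finset.sum_range_one]
    rw [← PowerSeries.coeff_zero_eq_constantCoeff_apply, h0,
      PowerSeries.coeff_zero_eq_constantCoeff_apply, Hf.1, zero_mul]
  have hone : coeff (R := Z) 1 (psComp f h) = 1 := by
    rw [coeff_psComp]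
    rw [show (1 : ℕ) + 1 = 2 from rfl, Finset.sum_range_succ, Finset.sum_range_one]
    rw [pow_zero, PowerSeries.coeff_one, if_neg one_ne_zero, pow_one, Hf.2.1, Hh.2.1]
    ring
  have hmid : ∀ j, 2 ≤ j → j < k → coeff (R := Z) j (psComp f h) = 0 := by
    intro m h2 hmk
    rw [coeff_psComp]
    apply Finset.sum_eq_zero
    intro j hj
    simp only [Finset.mem_range] at hj
    rcases Nat.lt_or_ge j 2 with hj2 | hj2
    · interval_cases j
      · rw [pow_zero, PowerSeries.coeff_one, if_neg (by omega)]
        ring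
      · rw [Hf.2.1, pow_one, Hh.2.2 m h2 hmk]
        ring
    · rw [Hf.2.2 j hj2 (by omega)]
      ring
  refine ⟨⟨hconst, hone, hmid⟩, ?_⟩
  rw [coeff_psComp]
  have key : ∀ j ∈ Finset.range (k + 1),
      coeff (R := Z) j f * coeff (R := Z) k (h ^ j) =
        (if j = 1 then coeff (R := Z) k h else 0) + (if j = k then coeff (R := Z) k f else 0) := by
    intro j hj
    simp only [Finset.mem_range] at hj
    rcases eq_or_ne j 1 with rfl | hj1
    · rw [if_pos rfl, if_neg (by omega), Hf.2.1, pow_one]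
      ring
    rcases eq_or_ne j k with rfl | hjk
    · rw [if_neg hj1, if_pos rfl, psTame_coeff_pow_self hk Hh]
      ring
    rw [if_neg hj1, if_neg hjk]
    rcases Nat.eq_zero_or_pos j with rfl | hjpos
    · rw [pow_zero, PowerSeries.coeff_one, if_neg (by omega)]
      ring
    · rw [Hf.2.2 j (by omega) (by omega)]
      ring
  rw [Finset.sum_congr rfl key, Finset.sum_add_distrib]
  rw [Finset.sum_ite_eq' (Finset.range (k + 1)) 1 fun _ => coeff (R := Z) k h,
    Finset.sum_ite_eq' (Finset.range (k + 1)) k fun _ => coeff (R := Z) k f]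
  rw [if_pos (Finset.mem_range.mpr (by omega)), if_pos (Finset.self_mem_range_succ k)]
  ring

lemma psTame_iter {k : ℕ} {f : Z⟦X⟧} (hk : 2 ≤ k) (Hf : PsTame k f) (m : ℕ) :
    PsTame k (psIter f m) ∧ coeff (R := Z) k (psIter f m) = (m : Z) * coeff (R := Z) k f := by
  induction m with
  | zero =>
    refine ⟨⟨PowerSeries.constantCoeff_X, ?_, fun j h2 hjk => ?_⟩, ?_⟩
    · show coeff (R := Z) 1 (PowerSeries.X : Z⟦X⟧) = 1
      rw [PowerSeries.coeff_X, if_pos rfl]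
    · show coeff (R := Z) j (PowerSeries.X : Z⟦X⟧) = 0
      rw [PowerSeries.coeff_X, if_neg (by omega)]
    · show coeff (R := Z) k (PowerSeries.X : Z⟦X⟧) = ((0 : ℕ) : Z) * coeff (R := Z) k f
      rw [PowerSeries.coeff_X, if_neg (by omega)]
      push_cast
      ring
  | succ m ih =>
    have hc := psTame_comp hk Hf ih.1
    refine ⟨hc.1, ?_⟩
    show coeff (R := Z) k (psComp f (psIter f m)) = _
    rw [hc.2, ih.2]
    push_cast
    ring

end Aux

/-- over a field of characteristic 0, if `ω^[n] = g` in `𝒥(K)` then the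
multiplicity of `ω` equals that of `g`, i.e. `order (ω − X) = order (g − X)`. -/
theorem multiplicity_root_eq_char_zero {K : Type*} [Field K] [CharZero K] (g ω : K⟦X⟧)
    (hg0 : constantCoeff (R := K) g = 0) (hg1 : coeff (R := K) 1 g = 1)
    (hω0 : constantCoeff (R := K) ω = 0) (hω1 : coeff (R := K) 1 ω = 1)
    (n : ℕ) (hn : 1 ≤ n) (hroot : psIter ω n = g) :
    (ω - PowerSeries.X).order = (g - PowerSeries.X).order := by
  by_cases hωX : ω - PowerSeries.X = 0
  · -- ω = X, hence g = X
    have hω : ω = PowerSeries.X := by rwa [sub_eq_zero] at hωX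
    have hTX : ∀ k : ℕ, PsTame k (PowerSeries.X : K⟦X⟧) := fun k =>
      ⟨PowerSeries.constantCoeff_X, by rw [PowerSeries.coeff_X, if_pos rfl],
        fun j hj hjk => by rw [PowerSeries.coeff_X, if_neg (by omega)]⟩
    have hg : g = PowerSeries.X := by
      rw [← hroot, hω]
      ext m
      rcases Nat.lt_or_ge m 2 with h2 | h2
      · interval_cases m
        · have h0 := (psTame_iter (k := 2) le_rfl (hTX 2) n).1.1
          rw [← PowerSeries.coeff_zero_eq_constantCoeff_apply] at h0
          rw [h0, PowerSeries.coeff_X, if_neg (by omega)]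
        · have h1 := (psTame_iter (k := 2) le_rfl (hTX 2) n).1.2.1
          rw [h1, PowerSeries.coeff_X, if_pos rfl]
      · have hm := (psTame_iter (k := m + 1) (by omega) (hTX (m + 1)) n).1.2.2 m h2 (by omega)
        rw [hm, PowerSeries.coeff_X, if_neg (by omega)]
    rw [hω, hg]
  · -- ω ≠ X; let k be the order of ω - X
    have hfin : (ω - PowerSeries.X).order ≠ ⊤ := by
      rw [← lt_top_iff_ne_top]
      exact PowerSeries.order_finite_iff_ne_zero.mpr hωX
    lift (ω - PowerSeries.X).order to ℕ using hfin with k hk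
    obtain ⟨hck, hlow⟩ := PowerSeries.order_eq_nat.mp hk.symm
    have hk2 : 2 ≤ k := by
      by_contra hlt
      interval_cases k
      · apply hck
        rw [map_sub, PowerSeries.coeff_zero_eq_constantCoeff_apply,
          PowerSeries.coeff_zero_eq_constantCoeff_apply, hω0, PowerSeries.constantCoeff_X]
        ring
      · apply hck
        rw [map_sub, hω1, PowerSeries.coeff_X, if_pos rfl]
        ring
    have hT : PsTame k ω := by
      refine ⟨hω0, hω1, fun j h2 hjk => ?_⟩
      have hj0 := hlow j hjk
      rw [map_sub, PowerSeries.coeff_X, if_neg (by omega), sub_zero] at hj0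
      exact hj0
    have hiter := psTame_iter hk2 hT n
    have hckω : coeff (R := K) k ω ≠ 0 := by
      intro h0
      apply hck
      rw [map_sub, h0, PowerSeries.coeff_X, if_neg (by omega)]
      ring
    have hgorder : (g - PowerSeries.X).order = (k : ℕ∞) := by
      rw [PowerSeries.order_eq_nat]
      constructor
      · rw [← hroot, map_sub, hiter.2, PowerSeries.coeff_X, if_neg (by omega), sub_zero]
        exact mul_ne_zero (Nat.cast_ne_zero.mpr (by omega)) hckω
      · intro i hik
        rw [← hroot, map_sub]
        rcases Nat.lt_or_ge i 2 with h2 | h2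
        · interval_cases i
          · rw [PowerSeries.coeff_zero_eq_constantCoeff_apply,
              PowerSeries.coeff_zero_eq_constantCoeff_apply,
              hiter.1.1, PowerSeries.constantCoeff_X, sub_zero]
          · rw [hiter.1.2.1, PowerSeries.coeff_X, if_pos rfl]
            ring
        · rw [hiter.1.2.2 i h2 hik, PowerSeries.coeff_X, if_neg (by omega)]
          ring
    rw [hgorder]
end

section
/- Let Z be a nontrivial commutative ring with unity of characteristic p > 0, and let n be a positive integer with n ≡ 0 (mod p). Then the element g = x + x² of J(Z) has no root of order n: there is no ω ∈ J(Z) with ω^[n] = x + x². In particular J(Z) is not algebraically complete. -/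
open PowerSeries Finset

/-- over a nontrivial commutative ring of characteristic `p > 0`, if `p ∣ n`
(`n ≥ 1`) then `g = x + x²` has no iterative root of order `n` in `𝒥(Z)`; in particular
`𝒥(Z)` is not algebraically complete. -/
theorem no_root_char_p {Z : Type*} [CommRing Z] [Nontrivial Z]
    (p : ℕ) [CharP Z p] (hp : 0 < p) (n : ℕ) (hn : 1 ≤ n) (hpn : p ∣ n) :
    ¬ ∃ ω : Z⟦X⟧, (constantCoeff (R := Z) ω = 0 ∧ coeff (R := Z) 1 ω = 1) ∧
        psIter ω n = PowerSeries.X + PowerSeries.X ^ 2 := by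
  rintro ⟨ω, ⟨h0, h1⟩, hiter⟩
  set a := coeff (R := Z) 2 ω with ha
  have h0' : coeff (R := Z) 0 ω = 0 := by rwa [coeff_zero_eq_constantCoeff]
  have key : ∀ m : ℕ, coeff (R := Z) 0 (psIter ω m) = 0 ∧
      coeff (R := Z) 1 (psIter ω m) = 1 ∧ coeff (R := Z) 2 (psIter ω m) = (m : Z) * a := by
    intro m
    induction m with
    | zero => simp [psIter, coeff_X]
    | succ m ih =>
      obtain ⟨i0, i1, i2⟩ := ih
      have hsq : coeff (R := Z) 2 ((psIter ω m) ^ 2) = 1 := by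
        rw [pow_two, coeff_mul, Finset.Nat.sum_antidiagonal_eq_sum_range_succ_mk]
        simp [Finset.sum_range_succ, i0, i1]
      refine ⟨?_, ?_, ?_⟩
      · show coeff (R := Z) 0 (psComp ω (psIter ω m)) = 0
        simp [psComp, coeff_mk, Finset.sum_range_succ, h0']
      · show coeff (R := Z) 1 (psComp ω (psIter ω m)) = 1
        simp [psComp, coeff_mk, Finset.sum_range_succ, h0', h1, i1]
      · show coeff (R := Z) 2 (psComp ω (psIter ω m)) = ((m + 1 : ℕ) : Z) * a
        push_cast
        simp [psComp, coeff_mk, Finset.sum_range_succ, h0', h1, i2, hsq]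
        ring
  obtain ⟨-, -, k2⟩ := key n
  rw [hiter] at k2
  have hcast : (n : Z) = 0 := ((CharP.cast_eq_zero_iff Z p n).mpr hpn)
  rw [hcast, zero_mul] at k2
  simp [coeff_X] at k2
end
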